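/- Let n ≥ 1, i ≥ 0, j ≥ 1 be integers. Let U ⊆ S_i be a ℂ-subspace and let U_j ⊆ S_{i+j} be the image of the multiplication map U ⊗ S_j → S_{i+j}. If 0 ≠ U ⊊ S_i, then dim(U_j) > dim(U) · C(i+j+n, n) / C(i+n, n), i.e. dim(U_j) · C(i+n, n) > dim(U) · C(i+j+n, n). -/

import Mathlib

open MvPolynomial

open Finset Pointwise Module

set_option linter.unusedSectionVars false
set_option linter.unusedVariables false

variable {σ : Type*} [DecidableEq σ] [Fintype σ] [LinearOrder σ]

noncomputable def Mon (σ : Type*) [DecidableEq σ] [Fintype σ] [LinearOrder σ] (d : ℕ) : Finset (σ →₀ ℕ) :=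
  ((Fintype.piFinset fun _ : σ => Finset.range (d+1)).filter
    (fun f => ∑ k, f k = d)).image Finsupp.equivFunOnFinite.symm

lemma mem_Mon {d : ℕ} {μ : σ →₀ ℕ} : μ ∈ Mon σ d ↔ ∑ k, μ k = d := by
  constructor
  · rintro h
    simp only [Mon, Finset.mem_image, Finset.mem_filter] at h
    obtain ⟨f, ⟨-, hs⟩, rfl⟩ := h
    simpa using hs
  · intro h
    simp only [Mon, Finset.mem_image, Finset.mem_filter]
    refine ⟨⇑μ, ⟨?_, by simpa using h⟩, by simp⟩
    rw [Fintype.mem_piFinset]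
    intro k
    rw [Finset.mem_range, Nat.lt_succ_iff, ← h]
    exact Finset.single_le_sum (f := fun k => μ k) (fun _ _ => Nat.zero_le _) (mem_univ k)

lemma Mon_zero : Mon σ 0 = {0} := by
  ext μ
  simp only [mem_Mon, Finset.mem_singleton, Finset.sum_eq_zero_iff, mem_univ, forall_true_left]
  constructor
  · intro h; ext k; simpa using h k
  · rintro rfl; simp

lemma exists_pos_of_mem_Mon {d : ℕ} {μ : σ →₀ ℕ} (h : μ ∈ Mon σ (d+1)) :
    ∃ k, 1 ≤ μ k := by
  by_contra hc
  push_neg at hc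
  have : ∑ k, μ k = 0 := Finset.sum_eq_zero fun k _ => Nat.lt_one_iff.mp (hc k)
  rw [mem_Mon] at h; omega

lemma sum_single_apply (k : σ) : (∑ j, (Finsupp.single k 1 : σ →₀ ℕ) j) = 1 := by
  simp [Finsupp.single_apply]

lemma sub_single_mem_Mon {d : ℕ} {μ : σ →₀ ℕ} (h : μ ∈ Mon σ (d+1)) {k : σ}
    (hk : 1 ≤ μ k) : μ - Finsupp.single k 1 ∈ Mon σ d ∧
      (μ - Finsupp.single k 1) + Finsupp.single k 1 = μ := by
  set ν : σ →₀ ℕ := μ - Finsupp.single k 1 with hν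
  have he : ν + Finsupp.single k 1 = μ := by
    have : Finsupp.single k 1 ≤ μ := by
      rw [Finsupp.single_le_iff]; exact hk
    exact tsub_add_cancel_of_le this
  refine ⟨?_, he⟩
  rw [mem_Mon] at h ⊢
  have h2 := congrArg (fun x : σ →₀ ℕ => ∑ j, x j) he
  simp only [Finsupp.add_apply, Finset.sum_add_distrib, sum_single_apply, h] at h2
  omega

lemma Mon_add_Mon : ∀ a b : ℕ, Mon σ a + Mon σ b = Mon σ (a+b) := by
  intro a
  induction a with
  | zero =>
    intro b
    rw [Mon_zero]
    ext μ
    simp only [Finset.mem_add, Finset.mem_singleton]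
    constructor
    · rintro ⟨x, rfl, y, hy, rfl⟩; simpa using hy
    · intro h; exact ⟨0, rfl, μ, by simpa using h, (zero_add μ)⟩
  | succ a ih =>
    intro b
    apply Finset.Subset.antisymm
    · intro μ hμ
      rw [Finset.mem_add] at hμ
      obtain ⟨x, hx, y, hy, rfl⟩ := hμ
      rw [mem_Mon] at hx hy ⊢
      simp only [Finsupp.add_apply, Finset.sum_add_distrib, hx, hy]
    · intro μ hμ
      have hμ' : μ ∈ Mon σ ((a + b) + 1) := by rw [mem_Mon] at hμ ⊢; omega
      obtain ⟨k, hk⟩ := exists_pos_of_mem_Mon hμ'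
      obtain ⟨hmem, he⟩ := sub_single_mem_Mon hμ' hk
      rw [← ih] at hmem
      rw [Finset.mem_add] at hmem
      obtain ⟨x, hx, y, hy, hxy⟩ := hmem
      rw [Finset.mem_add]
      refine ⟨x + Finsupp.single k 1, ?_, y, hy, ?_⟩
      · rw [mem_Mon] at hx ⊢
        simp [Finset.sum_add_distrib, hx, sum_single_apply]
      · rw [← he, ← hxy]; abel

lemma Mon_nonempty (d : ℕ) [Nonempty σ] : (Mon σ d).Nonempty := by
  classical
  refine ⟨Finsupp.single (Classical.arbitrary σ) d, ?_⟩
  rw [mem_Mon]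
  simp [Finsupp.single_apply]

lemma single_mem_Mon_one (k : σ) : Finsupp.single k 1 ∈ Mon σ 1 := by
  rw [mem_Mon]; exact sum_single_apply k


-- the counting set-up
section count
variable (d : ℕ) (M : Finset (σ →₀ ℕ))

/-- The fiber of the shadow map over `μ'`. -/
noncomputable def fib (μ' : σ →₀ ℕ) : Finset ((σ →₀ ℕ) × σ) :=
  (M ×ˢ Finset.univ).filter (fun p => p.1 + Finsupp.single p.2 1 = μ')

lemma total_weight (hM : M ⊆ Mon σ d) :
    ∑ p ∈ M ×ˢ Finset.univ, (p.1 p.2 + 1) = (d + Fintype.card σ) * M.card := by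
  rw [Finset.sum_product]
  have h1 : ∀ m ∈ M, ∑ k, (m k + 1) = d + Fintype.card σ := by
    intro m hm
    have : ∑ k, (m k + 1) = (∑ k, m k) + Fintype.card σ := by
      rw [Finset.sum_add_distrib]; simp [Finset.card_univ]
    rw [this, mem_Mon.mp (hM hm)]
  calc ∑ m ∈ M, ∑ k, (m k + 1) = ∑ m ∈ M, (d + Fintype.card σ) :=
        Finset.sum_congr rfl h1
    _ = (d + Fintype.card σ) * M.card := by rw [Finset.sum_const, smul_eq_mul, mul_comm]

lemma fib_mem {μ' : σ →₀ ℕ} {p : (σ →₀ ℕ) × σ} (hp : p ∈ fib M μ') :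
    p.1 ∈ M ∧ p.1 + Finsupp.single p.2 1 = μ' := by
  simp only [fib, Finset.mem_filter, Finset.mem_product] at hp
  exact ⟨hp.1.1, hp.2⟩

lemma fib_weight_apply {μ' : σ →₀ ℕ} {p : (σ →₀ ℕ) × σ} (hp : p ∈ fib M μ') :
    p.1 p.2 + 1 = μ' p.2 := by
  obtain ⟨-, he⟩ := fib_mem M hp
  have := congrArg (fun x : σ →₀ ℕ => x p.2) he
  simpa using this

lemma fib_snd_injOn {μ' : σ →₀ ℕ} : Set.InjOn Prod.snd (fib M μ' : Set ((σ →₀ ℕ) × σ)) := by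
  rintro ⟨m1, k1⟩ h1 ⟨m2, k2⟩ h2 h
  rw [Finset.mem_coe] at h1 h2
  obtain ⟨-, e1⟩ := fib_mem M h1
  obtain ⟨-, e2⟩ := fib_mem M h2
  cases h
  exact Prod.ext (add_right_cancel (e1.trans e2.symm)) rfl

lemma fib_sum_eq_image {μ' : σ →₀ ℕ} :
    ∑ p ∈ fib M μ', (p.1 p.2 + 1) = ∑ k ∈ (fib M μ').image Prod.snd, μ' k := by
  rw [Finset.sum_congr rfl (fun p hp => fib_weight_apply M hp),
    Finset.sum_image (fun x hx y hy h => fib_snd_injOn M hx hy h)]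

lemma fib_weight_le {μ' : σ →₀ ℕ} (hμ' : μ' ∈ Mon σ (d+1)) :
    ∑ p ∈ fib M μ', (p.1 p.2 + 1) ≤ d + 1 := by
  rw [fib_sum_eq_image]
  calc ∑ k ∈ (fib M μ').image Prod.snd, μ' k ≤ ∑ k, μ' k :=
        Finset.sum_le_sum_of_subset (Finset.subset_univ _)
    _ = d + 1 := mem_Mon.mp hμ'

lemma fib_weight_eq {μ' : σ →₀ ℕ} (hμ' : μ' ∈ Mon σ (d+1)) :
    ∑ p ∈ fib (Mon σ d) μ', (p.1 p.2 + 1) = d + 1 := by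
  rw [fib_sum_eq_image]
  rw [Finset.sum_subset (Finset.subset_univ _) ?_]
  · exact mem_Mon.mp hμ'
  · intro k _ hk
    by_contra h0
    have hk1 : 1 ≤ μ' k := Nat.one_le_iff_ne_zero.mpr h0
    obtain ⟨hmem, he⟩ := sub_single_mem_Mon hμ' hk1
    exact hk (Finset.mem_image.mpr ⟨⟨μ' - Finsupp.single k 1, k⟩, by
      simp only [fib, Finset.mem_filter, Finset.mem_product, Finset.mem_univ, and_true]
      exact ⟨hmem, he⟩, rfl⟩)

lemma sum_fib (hM : M ⊆ Mon σ d) :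
    ∑ μ' ∈ M + Mon σ 1, (∑ p ∈ fib M μ', (p.1 p.2 + 1)) =
      ∑ p ∈ M ×ˢ Finset.univ, (p.1 p.2 + 1) :=
  Finset.sum_fiberwise_of_maps_to
    (g := fun p : (σ →₀ ℕ) × σ => p.1 + Finsupp.single p.2 1)
    (fun p hp => Finset.add_mem_add (Finset.mem_product.mp hp).1 (single_mem_Mon_one p.2)) _

lemma step_le (hM : M ⊆ Mon σ d) :
    (d + Fintype.card σ) * M.card ≤ (d+1) * (M + Mon σ 1).card := by
  have hsub : M + Mon σ 1 ⊆ Mon σ (d+1) := by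
    have := Mon_add_Mon (σ := σ) d 1
    calc M + Mon σ 1 ⊆ Mon σ d + Mon σ 1 := Finset.add_subset_add_right hM
      _ = Mon σ (d+1) := Mon_add_Mon d 1
  calc (d + Fintype.card σ) * M.card = ∑ p ∈ M ×ˢ Finset.univ, (p.1 p.2 + 1) :=
        (total_weight d M hM).symm
    _ = ∑ μ' ∈ M + Mon σ 1, (∑ p ∈ fib M μ', (p.1 p.2 + 1)) := (sum_fib d M hM).symm
    _ ≤ ∑ μ' ∈ M + Mon σ 1, (d+1) :=
        Finset.sum_le_sum (fun μ' hμ' => fib_weight_le d M (hsub hμ'))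
    _ = (d+1) * (M + Mon σ 1).card := by rw [Finset.sum_const, smul_eq_mul, mul_comm]

lemma step_eq : (d + Fintype.card σ) * (Mon σ d).card = (d+1) * (Mon σ (d+1)).card := by
  have hfull : Mon σ d + Mon σ 1 = Mon σ (d+1) := Mon_add_Mon d 1
  calc (d + Fintype.card σ) * (Mon σ d).card
      = ∑ p ∈ (Mon σ d) ×ˢ Finset.univ, (p.1 p.2 + 1) :=
        (total_weight d _ Finset.Subset.rfl).symm
    _ = ∑ μ' ∈ Mon σ d + Mon σ 1, (∑ p ∈ fib (Mon σ d) μ', (p.1 p.2 + 1)) :=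
        (sum_fib d _ Finset.Subset.rfl).symm
    _ = ∑ μ' ∈ Mon σ d + Mon σ 1, (d+1) :=
        Finset.sum_congr rfl (fun μ' hμ' => fib_weight_eq d (hfull ▸ hμ'))
    _ = (d+1) * (Mon σ (d+1)).card := by
        rw [Finset.sum_const, smul_eq_mul, mul_comm, hfull]

end count

section strict
variable {d : ℕ} {M : Finset (σ →₀ ℕ)}

lemma exists_lt_of_ne_of_sum_eq {m w : σ →₀ ℕ} (hne : m ≠ w)
    (hs : ∑ k, m k = ∑ k, w k) : (∃ k, w k < m k) ∧ (∃ l, m l < w l) := by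
  constructor
  · by_contra hc
    push_neg at hc
    -- m ≤ w pointwise with equal sums ⟹ equal
    have : ∀ k ∈ Finset.univ, m k = w k := by
      intro k _
      by_contra hk
      have h1 : m k < w k := lt_of_le_of_ne (hc k) hk
      have : ∑ k, m k < ∑ k, w k :=
        Finset.sum_lt_sum (fun i _ => hc i) ⟨k, Finset.mem_univ k, h1⟩
      omega
    exact hne (Finsupp.ext (fun k => this k (Finset.mem_univ k)))
  · by_contra hc
    push_neg at hc
    have : ∀ k ∈ Finset.univ, w k = m k := by
      intro k _
      by_contra hk
      have h1 : w k < m k := lt_of_le_of_ne (hc k) hk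
      have : ∑ k, w k < ∑ k, m k :=
        Finset.sum_lt_sum (fun i _ => hc i) ⟨k, Finset.mem_univ k, h1⟩
      omega
    exact hne (Finsupp.ext (fun k => (this k (Finset.mem_univ k)).symm))

/-- Connectivity: an adjacent pair across the boundary of `M`. -/
lemma exists_adjacent (hMle : M ⊆ Mon σ d) :
    ∀ N : ℕ, ∀ m w : σ →₀ ℕ, m ∈ M → w ∈ Mon σ d → w ∉ M →
      (∑ k, (m k - w k)) ≤ N →
      ∃ u ∈ M, ∃ v ∈ Mon σ d, v ∉ M ∧ ∃ k l : σ, k ≠ l ∧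
        u + Finsupp.single l 1 = v + Finsupp.single k 1 := by
  intro N
  induction N with
  | zero =>
    intro m w hm hw hwM h0
    exfalso
    have hsum : ∑ k, m k = ∑ k, w k := by
      rw [mem_Mon.mp (hMle hm), mem_Mon.mp hw]
    have hne : m ≠ w := fun h => hwM (h ▸ hm)
    obtain ⟨⟨k, hk⟩, -⟩ := exists_lt_of_ne_of_sum_eq hne hsum
    have : 1 ≤ m k - w k := by omega
    have : 1 ≤ ∑ j, (m j - w j) :=
      le_trans this (Finset.single_le_sum (f := fun j => m j - w j)
        (fun _ _ => Nat.zero_le _) (Finset.mem_univ k))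
    omega
  | succ N ih =>
    intro m w hm hw hwM hN
    have hsum : ∑ k, m k = ∑ k, w k := by
      rw [mem_Mon.mp (hMle hm), mem_Mon.mp hw]
    have hne : m ≠ w := fun h => hwM (h ▸ hm)
    obtain ⟨⟨k, hk⟩, ⟨l, hl⟩⟩ := exists_lt_of_ne_of_sum_eq hne hsum
    have hkl : k ≠ l := by rintro rfl; omega
    -- v := m - e_k + e_l
    have hmk : 1 ≤ m k := by omega
    have hmem : m ∈ Mon σ ((d-1)+1) := by
      have : d - 1 + 1 = d := by
        have : 1 ≤ d := by
          have := mem_Mon.mp (hMle hm)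
          have : m k ≤ ∑ j, m j :=
            Finset.single_le_sum (f := fun j => m j) (fun _ _ => Nat.zero_le _)
              (Finset.mem_univ k)
          omega
        omega
      rw [this]; exact hMle hm
    obtain ⟨hm', he⟩ := sub_single_mem_Mon hmem hmk
    set m₀ : σ →₀ ℕ := m - Finsupp.single k 1 with hm₀
    set v : σ →₀ ℕ := m₀ + Finsupp.single l 1 with hv
    have hveq : m + Finsupp.single l 1 = v + Finsupp.single k 1 := by
      rw [hv, ← he]; abel
    have hvMon : v ∈ Mon σ d := by
      rw [mem_Mon]
      have h1 := congrArg (fun x : σ →₀ ℕ => ∑ j, x j) hveq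
      simp only [Finsupp.add_apply, Finset.sum_add_distrib, sum_single_apply] at h1
      have := mem_Mon.mp (hMle hm)
      omega
    by_cases hvM : v ∈ M
    · -- recurse with (v, w); the distance decreased
      refine ih v w hvM hw hwM ?_
      -- coordinates of v
      have hvk : v k = m k - 1 := by
        have := congrArg (fun x : σ →₀ ℕ => x k) hveq
        simp only [Finsupp.add_apply, Finsupp.single_eq_same,
          Finsupp.single_eq_of_ne' (Ne.symm hkl)] at this
        omega
      have hvl : v l = m l + 1 := by
        have := congrArg (fun x : σ →₀ ℕ => x l) hveq
        simp only [Finsupp.add_apply, Finsupp.single_eq_same,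
          Finsupp.single_eq_of_ne' hkl] at this
        omega
      have hvother : ∀ j, j ≠ k → j ≠ l → v j = m j := by
        intro j hjk hjl
        have := congrArg (fun x : σ →₀ ℕ => x j) hveq
        simp only [Finsupp.add_apply,
          Finsupp.single_eq_of_ne' (Ne.symm hjk), Finsupp.single_eq_of_ne' (Ne.symm hjl)] at this
        omega
      have key : (∑ j, (v j - w j)) + 1 = ∑ j, (m j - w j) := by
        have : ∀ j ∈ Finset.univ, j ≠ k → (v j - w j) = (m j - w j) := by
          intro j _ hjk
          by_cases hjl : j = l
          · subst hjl; omega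
          · rw [hvother j hjk hjl]
        rw [← Finset.add_sum_erase _ _ (Finset.mem_univ k),
          ← Finset.add_sum_erase _ (fun j => m j - w j) (Finset.mem_univ k)]
        have h2 : ∑ j ∈ Finset.univ.erase k, (v j - w j) =
            ∑ j ∈ Finset.univ.erase k, (m j - w j) :=
          Finset.sum_congr rfl (fun j hj => this j (Finset.mem_of_mem_erase hj)
            (Finset.ne_of_mem_erase hj))
        rw [h2, hvk]
        omega
      omega
    · exact ⟨m, hm, v, hvMon, hvM, k, l, hkl, hveq⟩

lemma step_lt (hMle : M ⊆ Mon σ d) (hne : M.Nonempty) (hprop : M ≠ Mon σ d) :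
    (d + Fintype.card σ) * M.card < (d+1) * (M + Mon σ 1).card := by
  obtain ⟨m, hm⟩ := hne
  obtain ⟨w, hw, hwM⟩ : ∃ w ∈ Mon σ d, w ∉ M := by
    by_contra hc
    push_neg at hc
    exact hprop (Finset.Subset.antisymm hMle hc)
  obtain ⟨u, hu, v, hv, hvM, k, l, hkl, heq⟩ :=
    exists_adjacent hMle (∑ j, (m j - w j)) m w hm hw hwM le_rfl
  -- the distinguished shadow element
  set μ₀ : σ →₀ ℕ := u + Finsupp.single l 1 with hμ₀
  have hsub : M + Mon σ 1 ⊆ Mon σ (d+1) := by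
    calc M + Mon σ 1 ⊆ Mon σ d + Mon σ 1 := Finset.add_subset_add_right hMle
      _ = Mon σ (d+1) := Mon_add_Mon d 1
  have hμ₀mem : μ₀ ∈ M + Mon σ 1 := Finset.add_mem_add hu (single_mem_Mon_one l)
  -- strict fiber bound at μ₀
  have hfib₀ : ∑ p ∈ fib M μ₀, (p.1 p.2 + 1) < d + 1 := by
    rw [fib_sum_eq_image]
    have hknot : k ∉ (fib M μ₀).image Prod.snd := by
      intro hk
      obtain ⟨⟨m', k'⟩, hp, hk'⟩ := Finset.mem_image.mp hk
      cases hk'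
      obtain ⟨hm'M, he'⟩ := fib_mem M hp
      have : m' = v := add_right_cancel (he'.trans (hμ₀ ▸ heq))
      exact hvM (this ▸ hm'M)
    have hμ₀k : 1 ≤ μ₀ k := by
      have := congrArg (fun x : σ →₀ ℕ => x k) heq
      simp only [Finsupp.add_apply, Finsupp.single_eq_same] at this
      omega
    calc ∑ j ∈ (fib M μ₀).image Prod.snd, μ₀ j
        ≤ ∑ j ∈ Finset.univ.erase k, μ₀ j := by
          apply Finset.sum_le_sum_of_subset
          intro j hj
          exact Finset.mem_erase.mpr ⟨fun h => hknot (h ▸ hj), Finset.mem_univ j⟩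
      _ = (∑ j, μ₀ j) - μ₀ k := by
          rw [← Finset.add_sum_erase _ _ (Finset.mem_univ k)]
          omega
      _ < d + 1 := by
          have := mem_Mon.mp (hsub hμ₀mem)
          omega
  calc (d + Fintype.card σ) * M.card
      = ∑ μ' ∈ M + Mon σ 1, (∑ p ∈ fib M μ', (p.1 p.2 + 1)) := by
        rw [sum_fib d M hMle, total_weight d M hMle]
    _ < ∑ μ' ∈ M + Mon σ 1, (d+1) := by
        apply Finset.sum_lt_sum
        · exact fun μ' hμ' => fib_weight_le d M (hsub hμ')
        · exact ⟨μ₀, hμ₀mem, hfib₀⟩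
    _ = (d+1) * (M + Mon σ 1).card := by rw [Finset.sum_const, smul_eq_mul, mul_comm]

end strict

section cards
variable [Nonempty σ]

lemma card_Mon (d : ℕ) : (Mon σ d).card = (d + (Fintype.card σ - 1)).choose d := by
  induction d with
  | zero => rw [Mon_zero]; simp
  | succ d ih =>
    have hc1 : 1 ≤ Fintype.card σ := Fintype.card_pos
    have hstep := step_eq (σ := σ) d
    rw [ih] at hstep
    have key : (d + Fintype.card σ) * (d + (Fintype.card σ - 1)).choose d
        = (d+1) * ((d+1) + (Fintype.card σ - 1)).choose (d+1) := by
      have h := Nat.add_one_mul_choose_eq (d + (Fintype.card σ - 1)) d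
      have e1 : (d + (Fintype.card σ - 1)) + 1 = d + 1 + (Fintype.card σ - 1) := by omega
      have e2 : d + Fintype.card σ = d + 1 + (Fintype.card σ - 1) := by omega
      rw [e1] at h
      rw [e2, h, Nat.mul_comm]
    rw [key] at hstep
    exact Nat.eq_of_mul_eq_mul_left (by omega) hstep.symm

end cards

section chain
variable [Nonempty σ]

lemma Mon_card_pos (d : ℕ) : 0 < (Mon σ d).card := Finset.card_pos.mpr (Mon_nonempty d)

/-- one-step inequality in "cards of Mon" form -/
lemma step_le_card {d : ℕ} {M : Finset (σ →₀ ℕ)} (hM : M ⊆ Mon σ d) :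
    M.card * (Mon σ (d+1)).card ≤ (M + Mon σ 1).card * (Mon σ d).card := by
  have h1 := step_le d M hM
  have h2 := step_eq (σ := σ) d
  have key : ((d+1) * (d + Fintype.card σ)) * (M.card * (Mon σ (d+1)).card)
      ≤ ((d+1) * (d + Fintype.card σ)) * ((M + Mon σ 1).card * (Mon σ d).card) := by
    calc ((d+1) * (d + Fintype.card σ)) * (M.card * (Mon σ (d+1)).card)
        = ((d + Fintype.card σ) * M.card) * ((d+1) * (Mon σ (d+1)).card) := by ring
      _ = ((d + Fintype.card σ) * M.card) * ((d + Fintype.card σ) * (Mon σ d).card) := by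
          rw [h2]
      _ ≤ ((d+1) * (M + Mon σ 1).card) * ((d + Fintype.card σ) * (Mon σ d).card) := by
          exact Nat.mul_le_mul_right _ h1
      _ = ((d+1) * (d + Fintype.card σ)) * ((M + Mon σ 1).card * (Mon σ d).card) := by ring
  exact Nat.le_of_mul_le_mul_left key (by positivity)

lemma step_lt_card {d : ℕ} {M : Finset (σ →₀ ℕ)} (hM : M ⊆ Mon σ d)
    (hne : M.Nonempty) (hprop : M ≠ Mon σ d) :
    M.card * (Mon σ (d+1)).card < (M + Mon σ 1).card * (Mon σ d).card := by
  have h1 := step_lt hM hne hprop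
  have h2 := step_eq (σ := σ) d
  have hMd1 : 0 < (Mon σ (d+1)).card := Mon_card_pos _
  have key : ((d+1) * (d + Fintype.card σ)) * (M.card * (Mon σ (d+1)).card)
      < ((d+1) * (d + Fintype.card σ)) * ((M + Mon σ 1).card * (Mon σ d).card) := by
    calc ((d+1) * (d + Fintype.card σ)) * (M.card * (Mon σ (d+1)).card)
        = ((d + Fintype.card σ) * M.card) * ((d+1) * (Mon σ (d+1)).card) := by ring
      _ = ((d + Fintype.card σ) * M.card) * ((d + Fintype.card σ) * (Mon σ d).card) := by
          rw [h2]
      _ < ((d+1) * (M + Mon σ 1).card) * ((d + Fintype.card σ) * (Mon σ d).card) := by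
          apply Nat.mul_lt_mul_of_lt_of_le h1 le_rfl
          have : 1 ≤ Fintype.card σ := Fintype.card_pos
          have := Mon_card_pos (σ := σ) d
          positivity
      _ = ((d+1) * (d + Fintype.card σ)) * ((M + Mon σ 1).card * (Mon σ d).card) := by ring
  exact Nat.lt_of_mul_lt_mul_left key

lemma chain_le : ∀ (j i : ℕ) (M : Finset (σ →₀ ℕ)), M ⊆ Mon σ i →
    M.card * (Mon σ (i+j)).card ≤ (M + Mon σ j).card * (Mon σ i).card := by
  intro j
  induction j with
  | zero =>
    intro i M hM
    rw [Mon_zero]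
    have : M + ({0} : Finset (σ →₀ ℕ)) = M := by
      ext μ
      simp only [Finset.mem_add, Finset.mem_singleton]
      constructor
      · rintro ⟨x, hx, y, rfl, rfl⟩; simpa using hx
      · intro h; exact ⟨μ, h, 0, rfl, add_zero μ⟩
    rw [this, Nat.add_zero]
  | succ j ih =>
    intro i M hM
    have hM' : M + Mon σ 1 ⊆ Mon σ (i+1) := by
      calc M + Mon σ 1 ⊆ Mon σ i + Mon σ 1 := Finset.add_subset_add_right hM
        _ = Mon σ (i+1) := Mon_add_Mon i 1
    have hassoc : M + Mon σ (j+1) = (M + Mon σ 1) + Mon σ j := by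
      rw [add_assoc, Mon_add_Mon 1 j, Nat.add_comm 1 j]
    have h1 := ih (i+1) (M + Mon σ 1) hM'
    have h2 := step_le_card (σ := σ) hM
    -- combine: M.card * Mon(i+j+1) ≤ (M+Mon(j+1)).card * Mon i ; cancel Mon(i+1)
    have hpos : 0 < (Mon σ (i+1)).card := Mon_card_pos _
    have key : (Mon σ (i+1)).card * (M.card * (Mon σ (i+(j+1))).card)
        ≤ (Mon σ (i+1)).card * ((M + Mon σ (j+1)).card * (Mon σ i).card) := by
      calc (Mon σ (i+1)).card * (M.card * (Mon σ (i+(j+1))).card)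
          = (M.card * (Mon σ (i+1)).card) * (Mon σ (i+1+j)).card := by
            rw [show i+(j+1) = i+1+j by omega]; ring
        _ ≤ ((M + Mon σ 1).card * (Mon σ i).card) * (Mon σ (i+1+j)).card :=
            Nat.mul_le_mul_right _ h2
        _ = ((M + Mon σ 1).card * (Mon σ (i+1+j)).card) * (Mon σ i).card := by ring
        _ ≤ (((M + Mon σ 1) + Mon σ j).card * (Mon σ (i+1)).card) * (Mon σ i).card :=
            Nat.mul_le_mul_right _ h1
        _ = (Mon σ (i+1)).card * (((M + Mon σ 1) + Mon σ j).card * (Mon σ i).card) := by ring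
        _ = (Mon σ (i+1)).card * ((M + Mon σ (j+1)).card * (Mon σ i).card) := by
            rw [← hassoc]
    exact Nat.le_of_mul_le_mul_left key hpos

theorem chain_lt {j i : ℕ} (hj : 1 ≤ j) {M : Finset (σ →₀ ℕ)} (hM : M ⊆ Mon σ i)
    (hne : M.Nonempty) (hprop : M ≠ Mon σ i) :
    M.card * (Mon σ (i+j)).card < (M + Mon σ j).card * (Mon σ i).card := by
  obtain ⟨j', rfl⟩ : ∃ j', j = j' + 1 := ⟨j - 1, by omega⟩
  have hM' : M + Mon σ 1 ⊆ Mon σ (i+1) := by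
    calc M + Mon σ 1 ⊆ Mon σ i + Mon σ 1 := Finset.add_subset_add_right hM
      _ = Mon σ (i+1) := Mon_add_Mon i 1
  have hassoc : M + Mon σ (j'+1) = (M + Mon σ 1) + Mon σ j' := by
    rw [add_assoc, Mon_add_Mon 1 j', Nat.add_comm 1 j']
  have h1 := chain_le j' (i+1) (M + Mon σ 1) hM'
  have h2 := step_lt_card (σ := σ) hM hne hprop
  have hpos : 0 < (Mon σ (i+1)).card := Mon_card_pos _
  have key : (Mon σ (i+1)).card * (M.card * (Mon σ (i+(j'+1))).card)
      < (Mon σ (i+1)).card * ((M + Mon σ (j'+1)).card * (Mon σ i).card) := by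
    calc (Mon σ (i+1)).card * (M.card * (Mon σ (i+(j'+1))).card)
        = (M.card * (Mon σ (i+1)).card) * (Mon σ (i+1+j')).card := by
          rw [show i+(j'+1) = i+1+j' by omega]; ring
      _ < ((M + Mon σ 1).card * (Mon σ i).card) * (Mon σ (i+1+j')).card := by
          exact Nat.mul_lt_mul_of_lt_of_le h2 le_rfl (Mon_card_pos _)
      _ = ((M + Mon σ 1).card * (Mon σ (i+1+j')).card) * (Mon σ i).card := by ring
      _ ≤ (((M + Mon σ 1) + Mon σ j').card * (Mon σ (i+1)).card) * (Mon σ i).card :=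
          Nat.mul_le_mul_right _ h1
      _ = (Mon σ (i+1)).card * (((M + Mon σ 1) + Mon σ j').card * (Mon σ i).card) := by ring
      _ = (Mon σ (i+1)).card * ((M + Mon σ (j'+1)).card * (Mon σ i).card) := by
          rw [← hassoc]
  exact Nat.lt_of_mul_lt_mul_left key

end chain

-- bridging degrees
lemma degree_eq_sum (μ : σ →₀ ℕ) : μ.degree = ∑ k, μ k := by
  rw [Finsupp.degree]
  exact Finset.sum_subset (Finset.subset_univ _)
    (fun k _ hk => Finsupp.notMem_support_iff.mp hk)

lemma support_subset_Mon {d : ℕ} {f : MvPolynomial σ ℂ}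
    (hf : f ∈ homogeneousSubmodule σ ℂ d) : f.support ⊆ Mon σ d := by
  intro μ hμ
  rw [mem_Mon, ← degree_eq_sum, Finsupp.degree_eq_weight_one]
  rw [mem_homogeneousSubmodule] at hf
  exact hf (MvPolynomial.mem_support_iff.mp hμ)

-- Leading monomial theory
noncomputable def leadL (f : MvPolynomial σ ℂ) : Lex (σ →₀ ℕ) :=
  f.support.sup toLex

noncomputable def lead (f : MvPolynomial σ ℂ) : σ →₀ ℕ := ofLex (leadL f)

lemma lead_mem_support {f : MvPolynomial σ ℂ} (hf : f ≠ 0) : lead f ∈ f.support := by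
  obtain ⟨b, hb, he⟩ := Finset.exists_mem_eq_sup f.support
    (MvPolynomial.support_nonempty.mpr hf) toLex
  rw [lead, leadL, he]
  exact hb

lemma le_leadL {f : MvPolynomial σ ℂ} {μ : σ →₀ ℕ} (hμ : μ ∈ f.support) :
    toLex μ ≤ leadL f := Finset.le_sup hμ

lemma coeff_eq_zero_of_leadL_lt {f : MvPolynomial σ ℂ} {μ : σ →₀ ℕ}
    (h : leadL f < toLex μ) : MvPolynomial.coeff μ f = 0 := by
  by_contra hc
  exact absurd (le_leadL (MvPolynomial.mem_support_iff.mpr hc)) (not_le.mpr h)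

lemma coeff_lead_ne_zero {f : MvPolynomial σ ℂ} (hf : f ≠ 0) :
    MvPolynomial.coeff (lead f) f ≠ 0 :=
  MvPolynomial.mem_support_iff.mp (lead_mem_support hf)

lemma toLex_add_right {μ ν b : σ →₀ ℕ} (h : toLex μ ≤ toLex ν) :
    toLex (μ + b) ≤ toLex (ν + b) := by
  have : toLex μ + toLex b ≤ toLex ν + toLex b := add_le_add_left h _
  exact this

lemma leadL_mul_monomial {f : MvPolynomial σ ℂ} (hf : f ≠ 0) (b : σ →₀ ℕ) :
    leadL (f * monomial b 1) = toLex (lead f + b) := by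
  have hsupp : (f * monomial b 1).support = f.support.map (addRightEmbedding b) := by
    rw [← single_eq_monomial]
    exact AddMonoidAlgebra.support_coeff_mul_single f 1 (by simp) b
  apply le_antisymm
  · apply Finset.sup_le
    intro μ hμ
    rw [hsupp, Finset.mem_map] at hμ
    obtain ⟨ν, hν, rfl⟩ := hμ
    exact toLex_add_right (le_leadL hν)
  · have : lead f + b ∈ (f * monomial b 1).support := by
      rw [hsupp, Finset.mem_map]
      exact ⟨lead f, lead_mem_support hf, rfl⟩
    exact le_leadL this

lemma lead_mul_monomial {f : MvPolynomial σ ℂ} (hf : f ≠ 0) (b : σ →₀ ℕ) :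
    lead (f * monomial b 1) = lead f + b := by
  rw [lead, leadL_mul_monomial hf b]
  rfl

open Module

section lsets

/-- The finset of leading monomials of nonzero elements of `V ≤ S_d`. -/
noncomputable def LSetF (d : ℕ) (V : Submodule ℂ (MvPolynomial σ ℂ)) : Finset (σ →₀ ℕ) :=
  letI := Classical.decPred (fun μ : σ →₀ ℕ => ∃ f ∈ V, f ≠ 0 ∧ lead f = μ)
  (Mon σ d).filter (fun μ => ∃ f ∈ V, f ≠ 0 ∧ lead f = μ)

lemma mem_LSetF {d : ℕ} {V : Submodule ℂ (MvPolynomial σ ℂ)} {μ : σ →₀ ℕ} :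
    μ ∈ LSetF d V ↔ μ ∈ Mon σ d ∧ ∃ f ∈ V, f ≠ 0 ∧ lead f = μ := by
  classical
  rw [LSetF]
  convert Finset.mem_filter using 2

lemma lead_mem_LSetF {d : ℕ} {V : Submodule ℂ (MvPolynomial σ ℂ)}
    (hV : V ≤ homogeneousSubmodule σ ℂ d) {f : MvPolynomial σ ℂ}
    (hf : f ∈ V) (hf0 : f ≠ 0) : lead f ∈ LSetF d V :=
  mem_LSetF.mpr ⟨support_subset_Mon (hV hf) (lead_mem_support hf0), f, hf, hf0, rfl⟩

/-- The coordinate-projection map to functions on the lead set. -/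
noncomputable def proj (d : ℕ) (V : Submodule ℂ (MvPolynomial σ ℂ)) :
    ↥V →ₗ[ℂ] (↥(LSetF d V) → ℂ) where
  toFun f := fun μ => MvPolynomial.coeff μ.1 f.1
  map_add' f g := by ext μ; simp [MvPolynomial.coeff_add]
  map_smul' c f := by ext μ; simp [MvPolynomial.coeff_smul]

lemma proj_injective {d : ℕ} {V : Submodule ℂ (MvPolynomial σ ℂ)}
    (hV : V ≤ homogeneousSubmodule σ ℂ d) :
    Function.Injective (proj d V) := by
  rw [injective_iff_map_eq_zero]
  intro f hf
  by_contra hf0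
  have hne : f.1 ≠ 0 := fun h => hf0 (Subtype.ext h)
  have hmem : lead f.1 ∈ LSetF d V := lead_mem_LSetF hV f.2 hne
  have := congrFun hf ⟨lead f.1, hmem⟩
  exact coeff_lead_ne_zero hne (by simpa [proj] using this)

lemma finiteDimensional_of_le {d : ℕ} {V : Submodule ℂ (MvPolynomial σ ℂ)}
    (hV : V ≤ homogeneousSubmodule σ ℂ d) :
    FiniteDimensional ℂ ↥V :=
  Module.Finite.of_injective _ (proj_injective hV)

lemma finrank_le_card_LSetF {d : ℕ} {V : Submodule ℂ (MvPolynomial σ ℂ)}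
    (hV : V ≤ homogeneousSubmodule σ ℂ d) :
    finrank ℂ ↥V ≤ (LSetF d V).card := by
  have := LinearMap.finrank_le_finrank_of_injective (proj_injective hV)
  simpa [Module.finrank_pi] using this

/-- Elements with distinct leading monomials are linearly independent. -/
lemma card_le_finrank {V : Submodule ℂ (MvPolynomial σ ℂ)} [FiniteDimensional ℂ ↥V]
    (s : Finset (σ →₀ ℕ))
    (hs : ∀ μ ∈ s, ∃ f ∈ V, f ≠ 0 ∧ lead f = μ) :
    s.card ≤ finrank ℂ ↥V := by
  classical
  choose g hgV hg0 hglead using hs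
  let v : ↥s → ↥V := fun x => ⟨g x.1 x.2, hgV x.1 x.2⟩
  have hli : LinearIndependent ℂ v := by
    have hcomp : LinearIndependent ℂ (fun x : ↥s => g x.1 x.2) → LinearIndependent ℂ v :=
      fun h => h.of_comp V.subtype
    apply hcomp
    rw [linearIndependent_iff']
    intro t c hsum
    by_contra hc
    push_neg at hc
    obtain ⟨x₀, hx₀t, hx₀c⟩ := hc
    set t' := t.filter (fun x => c x ≠ 0) with ht'
    have ht'ne : t'.Nonempty := ⟨x₀, Finset.mem_filter.mpr ⟨hx₀t, hx₀c⟩⟩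
    obtain ⟨xs, hxs, hmax⟩ := Finset.exists_mem_eq_sup t' ht'ne (fun x : ↥s => toLex x.1)
    have hxsc : c xs ≠ 0 := (Finset.mem_filter.mp hxs).2
    have hcoeff := congrArg (MvPolynomial.coeff (xs.1 : σ →₀ ℕ)) hsum
    rw [MvPolynomial.coeff_sum] at hcoeff
    have hvanish : ∀ x ∈ t, x ≠ xs →
        MvPolynomial.coeff (xs.1 : σ →₀ ℕ) (c x • g x.1 x.2) = 0 := by
      intro x hx hne
      by_cases hcx : c x = 0
      · rw [hcx, zero_smul, MvPolynomial.coeff_zero]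
      · have hxt' : x ∈ t' := Finset.mem_filter.mpr ⟨hx, hcx⟩
        have hle : toLex (x.1 : σ →₀ ℕ) ≤ toLex (xs.1 : σ →₀ ℕ) :=
          hmax ▸ Finset.le_sup (f := fun x : ↥s => toLex (x.1 : σ →₀ ℕ)) hxt'
        have hlt : toLex (x.1 : σ →₀ ℕ) < toLex (xs.1 : σ →₀ ℕ) := by
          rcases lt_or_eq_of_le hle with h | h
          · exact h
          · exfalso
            apply hne
            apply Subtype.ext
            exact h
        have hLL : leadL (g x.1 x.2) < toLex (xs.1 : σ →₀ ℕ) := by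
          have he : leadL (g x.1 x.2) = toLex (x.1 : σ →₀ ℕ) := by
            have := hglead x.1 x.2
            rw [lead] at this
            exact_mod_cast congrArg toLex this
          rw [he]; exact hlt
        rw [MvPolynomial.coeff_smul, coeff_eq_zero_of_leadL_lt hLL, smul_zero]
    have hsingle : ∑ x ∈ t, MvPolynomial.coeff (xs.1 : σ →₀ ℕ) (c x • g x.1 x.2)
        = MvPolynomial.coeff (xs.1 : σ →₀ ℕ) (c xs • g xs.1 xs.2) :=
      Finset.sum_eq_single_of_mem xs (Finset.mem_filter.mp hxs).1 hvanish
    rw [hsingle] at hcoeff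
    rw [MvPolynomial.coeff_smul, MvPolynomial.coeff_zero] at hcoeff
    have hl : lead (g xs.1 xs.2) = xs.1 := hglead xs.1 xs.2
    have hc0 := coeff_lead_ne_zero (hg0 xs.1 xs.2)
    rw [hl] at hc0
    rcases smul_eq_zero.mp hcoeff with h | h
    · exact hxsc h
    · exact hc0 h
  have := hli.fintype_card_le_finrank
  simpa using this

end lsets

section assemble

lemma monomial_mem_S {d : ℕ} {μ : σ →₀ ℕ} (hμ : μ ∈ Mon σ d) :
    (monomial μ (1:ℂ)) ∈ homogeneousSubmodule σ ℂ d := by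
  rw [mem_homogeneousSubmodule]
  exact isHomogeneous_monomial _ (by rw [degree_eq_sum]; exact mem_Mon.mp hμ)

lemma lead_monomial {μ : σ →₀ ℕ} : lead (monomial μ (1:ℂ)) = μ := by
  have hs : (monomial μ (1:ℂ)).support = {μ} := by
    rw [MvPolynomial.support_monomial]
    simp
  rw [lead, leadL, hs, Finset.sup_singleton]
  rfl

lemma LSetF_S (d : ℕ) : LSetF d (homogeneousSubmodule σ ℂ d) = Mon σ d := by
  apply Finset.Subset.antisymm
  · intro μ hμ; exact (mem_LSetF.mp hμ).1
  · intro μ hμ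
    exact mem_LSetF.mpr ⟨hμ, monomial μ 1, monomial_mem_S hμ,
      by simp [MvPolynomial.monomial_eq_zero], lead_monomial⟩

lemma finrank_S (d : ℕ) :
    finrank ℂ ↥(homogeneousSubmodule σ ℂ d) = (Mon σ d).card := by
  have hfd : FiniteDimensional ℂ ↥(homogeneousSubmodule σ ℂ d) :=
    finiteDimensional_of_le le_rfl
  apply le_antisymm
  · have := finrank_le_card_LSetF (le_refl (homogeneousSubmodule σ ℂ d))
    rwa [LSetF_S] at this
  · exact card_le_finrank (Mon σ d) (fun μ hμ => ⟨monomial μ 1, monomial_mem_S hμ,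
      by simp [MvPolynomial.monomial_eq_zero], lead_monomial⟩)

lemma mul_le_S {i j : ℕ} {U : Submodule ℂ (MvPolynomial σ ℂ)}
    (hU : U ≤ homogeneousSubmodule σ ℂ i) :
    U * homogeneousSubmodule σ ℂ j ≤ homogeneousSubmodule σ ℂ (i+j) :=
  le_trans (mul_le_mul' hU (le_refl _)) (homogeneousSubmodule_mul i j)

lemma LSetF_mul {i j : ℕ} {U : Submodule ℂ (MvPolynomial σ ℂ)}
    (hU : U ≤ homogeneousSubmodule σ ℂ i) :
    LSetF i U + Mon σ j ⊆ LSetF (i+j) (U * homogeneousSubmodule σ ℂ j) := by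
  intro μ hμ
  rw [Finset.mem_add] at hμ
  obtain ⟨a, ha, b, hb, rfl⟩ := hμ
  obtain ⟨-, f, hfU, hf0, hflead⟩ := mem_LSetF.mp ha
  have hg : f * monomial b 1 ∈ U * homogeneousSubmodule σ ℂ j :=
    Submodule.mul_mem_mul hfU (monomial_mem_S hb)
  have hg0 : f * monomial b 1 ≠ 0 :=
    mul_ne_zero hf0 (by simp [MvPolynomial.monomial_eq_zero])
  have := lead_mem_LSetF (mul_le_S hU) hg hg0
  rwa [lead_mul_monomial hf0, hflead] at this
end assemble

set_option maxHeartbeats 1000000 in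
/-- If `0 ≠ U ⊊ S_i` is a subspace of the homogeneous polynomials of degree `i` in `n+1`
variables, and `U_j = U·S_j ⊆ S_{i+j}` is the image of the multiplication map
`U ⊗ S_j → S_{i+j}`, then `dim(U_j) · C(i+n,n) > dim(U) · C(i+j+n,n)`. -/
theorem stmt1 (n i j : ℕ) (hn : 1 ≤ n) (hj : 1 ≤ j)
    (U : Submodule ℂ (MvPolynomial (Fin (n+1)) ℂ))
    (hUle : U ≤ homogeneousSubmodule (Fin (n+1)) ℂ i)
    (hU0 : U ≠ ⊥) (hUne : U ≠ homogeneousSubmodule (Fin (n+1)) ℂ i) :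
    Module.finrank ℂ ↥(U * homogeneousSubmodule (Fin (n+1)) ℂ j) * (i+n).choose n >
      Module.finrank ℂ ↥U * (i+j+n).choose n := by
  set M : Finset (Fin (n+1) →₀ ℕ) := LSetF i U with hM
  have hMsub : M ⊆ Mon (Fin (n+1)) i := fun μ hμ => (mem_LSetF.mp hμ).1
  -- M is nonempty
  have hMne : M.Nonempty := by
    obtain ⟨f, hfU, hf0⟩ := Submodule.exists_mem_ne_zero_of_ne_bot hU0
    exact ⟨lead f, lead_mem_LSetF hUle hfU hf0⟩
  -- instances
  haveI hfdS : ∀ d : ℕ, FiniteDimensional ℂ ↥(homogeneousSubmodule (Fin (n+1)) ℂ d) :=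
    fun d => finiteDimensional_of_le le_rfl
  haveI hfdU : FiniteDimensional ℂ ↥U := finiteDimensional_of_le hUle
  haveI hfdUj : FiniteDimensional ℂ ↥(U * homogeneousSubmodule (Fin (n+1)) ℂ j) :=
    finiteDimensional_of_le (mul_le_S hUle)
  -- M is proper
  have hMprop : M ≠ Mon (Fin (n+1)) i := by
    intro heq
    apply hUne
    have h1 : (Mon (Fin (n+1)) i).card ≤ Module.finrank ℂ ↥U := by
      apply card_le_finrank (Mon (Fin (n+1)) i)
      intro μ hμ
      rw [← heq] at hμ
      exact (mem_LSetF.mp hμ).2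
    have h2 : Module.finrank ℂ ↥(homogeneousSubmodule (Fin (n+1)) ℂ i) ≤ Module.finrank ℂ ↥U := by
      rw [finrank_S]; exact h1
    exact (Submodule.eq_of_le_of_finrank_le hUle h2)
  -- combinatorial strict inequality
  have hcomb := chain_lt (σ := Fin (n+1)) hj hMsub hMne hMprop
  -- finrank bounds
  have hrankU : Module.finrank ℂ ↥U ≤ M.card := finrank_le_card_LSetF hUle
  have hrankUj : (M + Mon (Fin (n+1)) j).card ≤ Module.finrank ℂ ↥(U * homogeneousSubmodule (Fin (n+1)) ℂ j) := by
    apply card_le_finrank (M + Mon (Fin (n+1)) j)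
    intro μ hμ
    have h9 := LSetF_mul hUle hμ
    exact (mem_LSetF.mp h9).2
  -- card Mon conversions
  have hcard : ∀ d : ℕ, (Mon (Fin (n+1)) d).card = (d + n).choose n := by
    intro d
    rw [card_Mon]
    have h1 : Fintype.card (Fin (n+1)) - 1 = n := by simp [Fintype.card_fin]
    rw [h1]
    rw [← Nat.choose_symm (Nat.le_add_right d n)]
    congr 1
    omega
  calc Module.finrank ℂ ↥U * (i+j+n).choose n
      ≤ M.card * (i+j+n).choose n := Nat.mul_le_mul_right _ hrankU
    _ = M.card * (Mon (Fin (n+1)) (i+j)).card := by rw [hcard (i+j)]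
    _ < (M + Mon (Fin (n+1)) j).card * (Mon (Fin (n+1)) i).card := hcomb
    _ = (M + Mon (Fin (n+1)) j).card * (i+n).choose n := by rw [hcard i]
    _ ≤ Module.finrank ℂ ↥(U * homogeneousSubmodule (Fin (n+1)) ℂ j) * (i+n).choose n :=
        Nat.mul_le_mul_right _ hrankUj
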